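/- Let δ > 0 and set c_δ^∞ := 3/(4δ⁴). Let u : ℝ² → ℝ be a polynomial of total degree at most 3. Then for every x ∈ ℝ², 2 c_δ^∞ ∫_{{y : |y−x|_∞ ≤ δ}} (u(x) − u(y)) dy = −Δu(x), i.e., the correctly scaled constant-kernel nonlocal diffusion operator with infinity-norm ball truncation coincides with the classical negative Laplacian on polynomials of degree up to three. -/

import Mathlib

open MeasureTheory

/-- The Laplacian on `ℝ² = Fin 2 → ℝ` (equipped with the sup norm),
as a sum of second directional derivatives. -/
noncomputable def laplacianPi (u : (Fin 2 → ℝ) → ℝ) (x : Fin 2 → ℝ) : ℝ :=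
  ∑ i : Fin 2, fderiv ℝ (fun z => fderiv ℝ u z (Pi.single i 1)) x (Pi.single i 1)


noncomputable def proj2 (i : Fin 2) : (Fin 2 → ℝ) →L[ℝ] ℝ := ContinuousLinearMap.proj i

lemma hasF_mono (a b : ℕ) (x : Fin 2 → ℝ) :
    HasFDerivAt (fun z : Fin 2 → ℝ => (z 0)^a * (z 1)^b)
      (((x 0)^a • ((b : ℝ) * (x 1)^(b-1)) • proj2 1) + ((x 1)^b • ((a : ℝ) * (x 0)^(a-1)) • proj2 0)) x := by
  have h0 : HasFDerivAt (fun z : Fin 2 → ℝ => (z 0)^a) (((a : ℝ) * (x 0)^(a-1)) • proj2 0) x :=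
    (hasDerivAt_pow a (x 0)).comp_hasFDerivAt x (hasFDerivAt_apply 0 x)
  have h1 : HasFDerivAt (fun z : Fin 2 → ℝ => (z 1)^b) (((b : ℝ) * (x 1)^(b-1)) • proj2 1) x :=
    (hasDerivAt_pow b (x 1)).comp_hasFDerivAt x (hasFDerivAt_apply 1 x)
  exact h0.mul h1

lemma fderiv_mono_apply (a b : ℕ) (x : Fin 2 → ℝ) (i : Fin 2) :
    fderiv ℝ (fun z : Fin 2 → ℝ => (z 0)^a * (z 1)^b) x (Pi.single i 1)
      = if i = 0 then ((a : ℝ) * (x 0)^(a-1)) * (x 1)^b else (x 0)^a * ((b : ℝ) * (x 1)^(b-1)) := by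
  rw [(hasF_mono a b x).fderiv]
  fin_cases i <;> simp [proj2, mul_comm]

lemma fderiv_msum_apply {ι : Type*} (T : Finset ι) (c : ι → ℝ) (A B : ι → ℕ) (x : Fin 2 → ℝ) (i : Fin 2) :
    fderiv ℝ (fun z : Fin 2 → ℝ => ∑ m ∈ T, c m * ((z 0)^(A m) * (z 1)^(B m))) x (Pi.single i 1)
      = ∑ m ∈ T, c m * (if i = 0 then ((A m : ℝ) * (x 0)^(A m - 1)) * (x 1)^(B m)
          else (x 0)^(A m) * ((B m : ℝ) * (x 1)^(B m - 1))) := by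
  have H := HasFDerivAt.fun_sum (fun m (_ : m ∈ T) => (hasF_mono (A m) (B m) x).const_mul (c m))
  rw [H.fderiv]
  rw [ContinuousLinearMap.sum_apply]
  refine Finset.sum_congr rfl fun m _ => ?_
  fin_cases i <;> simp [proj2, mul_comm, mul_add, mul_assoc]

lemma laplacian_msum {ι : Type*} (T : Finset ι) (c : ι → ℝ) (A B : ι → ℕ) (x : Fin 2 → ℝ) :
    laplacianPi (fun z => ∑ m ∈ T, c m * ((z 0)^(A m) * (z 1)^(B m))) x
      = ∑ m ∈ T, c m * ((A m : ℝ) * ((A m - 1 : ℕ) : ℝ) * ((x 0)^(A m - 1 - 1) * (x 1)^(B m))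
          + (B m : ℝ) * ((B m - 1 : ℕ) : ℝ) * ((x 0)^(A m) * (x 1)^(B m - 1 - 1))) := by
  have e0 : (fun z : Fin 2 → ℝ =>
      fderiv ℝ (fun z : Fin 2 → ℝ => ∑ m ∈ T, c m * ((z 0)^(A m) * (z 1)^(B m))) z (Pi.single 0 1))
      = fun z => ∑ m ∈ T, (c m * (A m : ℝ)) * ((z 0)^(A m - 1) * (z 1)^(B m)) := by
    funext z
    rw [fderiv_msum_apply]
    simp only [if_pos rfl, if_true]
    exact Finset.sum_congr rfl fun m _ => by ring
  have e1 : (fun z : Fin 2 → ℝ =>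
      fderiv ℝ (fun z : Fin 2 → ℝ => ∑ m ∈ T, c m * ((z 0)^(A m) * (z 1)^(B m))) z (Pi.single 1 1))
      = fun z => ∑ m ∈ T, (c m * (B m : ℝ)) * ((z 0)^(A m) * (z 1)^(B m - 1)) := by
    funext z
    rw [fderiv_msum_apply]
    simp only [Fin.one_eq_zero_iff, OfNat.ofNat_ne_one, if_false]
    exact Finset.sum_congr rfl fun m _ => by ring
  rw [laplacianPi, Fin.sum_univ_two, e0, e1, fderiv_msum_apply, fderiv_msum_apply]
  simp only [if_pos rfl, if_true, Fin.one_eq_zero_iff, OfNat.ofNat_ne_one, if_false]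
  rw [← Finset.sum_add_distrib]
  exact Finset.sum_congr rfl fun m _ => by ring

lemma integral_box (I : Fin 2 → Set ℝ) (hI : ∀ i, MeasurableSet (I i)) (f : Fin 2 → ℝ → ℝ) :
    ∫ y in Set.univ.pi I, f 0 (y 0) * f 1 (y 1)
      = (∫ t in I 0, f 0 t) * (∫ t in I 1, f 1 t) := by
  rw [← integral_indicator (MeasurableSet.univ_pi hI)]
  have key : (Set.univ.pi I).indicator (fun y : Fin 2 → ℝ => f 0 (y 0) * f 1 (y 1))
      = fun y : Fin 2 → ℝ => ∏ i, ((I i).indicator (f i)) (y i) := by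
    funext y
    by_cases hy : y ∈ Set.univ.pi I
    · rw [Set.indicator_of_mem hy, Fin.prod_univ_two,
        Set.indicator_of_mem (hy 0 (Set.mem_univ 0)), Set.indicator_of_mem (hy 1 (Set.mem_univ 1))]
    · rw [Set.indicator_of_notMem hy]
      rw [Set.mem_pi] at hy
      push_neg at hy
      obtain ⟨i, -, hi⟩ := hy
      rw [Fin.prod_univ_two]
      have h2 : i = 0 ∨ i = 1 := by omega
      rcases h2 with rfl | rfl
      · rw [Set.indicator_of_notMem hi, zero_mul]
      · rw [Set.indicator_of_notMem hi, mul_zero]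
  rw [key, MeasureTheory.integral_fintype_prod_volume_eq_prod (ι := Fin 2) (fun i => (I i).indicator (f i)),
    Fin.prod_univ_two, integral_indicator (hI 0), integral_indicator (hI 1)]

lemma int_pow_Icc (a b : ℝ) (h : a ≤ b) (n : ℕ) :
    ∫ t in Set.Icc a b, t^n = (b^(n+1) - a^(n+1))/(n+1) := by
  rw [MeasureTheory.integral_Icc_eq_integral_Ioc, ← intervalIntegral.integral_of_le h,
    integral_pow]

lemma key_identity (δ : ℝ) (hδ : 0 < δ) (a b : ℕ) (hab : a + b ≤ 3) (s t : ℝ) :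
    2 * (3 / (4 * δ ^ 4)) * ((s^a * t^b) * ((2*δ) * (2*δ))
        - ((s+δ)^(a+1) - (s-δ)^(a+1))/(a+1) * (((t+δ)^(b+1) - (t-δ)^(b+1))/(b+1)))
      = -((a : ℝ) * ((a - 1 : ℕ) : ℝ) * (s^(a - 1 - 1) * t^b)
          + (b : ℝ) * ((b - 1 : ℕ) : ℝ) * (s^a * t^(b - 1 - 1))) := by
  have hd : δ ≠ 0 := hδ.ne'
  have ha : a ≤ 3 := by omega
  have hb : b ≤ 3 := by omega
  have hab2 := hab
  interval_cases a <;> interval_cases b <;>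
    first
      | omega
      | (norm_num
         try field_simp
         try ring_nf
         try norm_num [hd]
         try ring)

/-- the correctly scaled constant-kernel nonlocal diffusion operator with
infinity-norm ball truncation coincides with the classical negative Laplacian on
polynomials of degree up to three.  Here `dist` on `Fin 2 → ℝ` is the sup distance,
so `{y | dist y x ≤ δ}` is the infinity-norm ball `B_δ^∞(x)`. -/
theorem infinity_ball_on_cubics
    (δ : ℝ) (hδ : 0 < δ)
    (c : ℝ) (hc : c = 3 / (4 * δ ^ 4))
    (p : MvPolynomial (Fin 2) ℝ) (hp : p.totalDegree ≤ 3)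
    (u : (Fin 2 → ℝ) → ℝ)
    (hu : ∀ x, u x = MvPolynomial.eval x p)
    (x : Fin 2 → ℝ) :
    2 * c * ∫ y in {y : Fin 2 → ℝ | dist y x ≤ δ}, (u x - u y)
      = - laplacianPi u x := by
  
  classical
  have hball : {y : Fin 2 → ℝ | dist y x ≤ δ} = Metric.closedBall x δ := rfl
  have hS : {y : Fin 2 → ℝ | dist y x ≤ δ}
      = Set.univ.pi (fun i => Set.Icc (x i - δ) (x i + δ)) := by
    rw [hball, closedBall_pi x hδ.le]
    simp only [Real.closedBall_eq_Icc]
  have hcmp : IsCompact {y : Fin 2 → ℝ | dist y x ≤ δ} := by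
    rw [hball]; exact isCompact_closedBall x δ
  have hmeas : MeasurableSet {y : Fin 2 → ℝ | dist y x ≤ δ} := by
    rw [hball]; exact measurableSet_closedBall
  have hu' : ∀ z, u z = ∑ m ∈ p.support,
      MvPolynomial.coeff m p * ((z 0)^(m 0) * (z 1)^(m 1)) := by
    intro z
    rw [hu z, MvPolynomial.eval_eq']
    exact Finset.sum_congr rfl fun m _ => by rw [Fin.prod_univ_two]
  -- the Laplacian side
  have hU : u = fun z => ∑ m ∈ p.support,
      MvPolynomial.coeff m p * ((z 0)^(m 0) * (z 1)^(m 1)) := funext hu'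
  have hlap : laplacianPi u x = ∑ m ∈ p.support, MvPolynomial.coeff m p *
      ((m 0 : ℝ) * ((m 0 - 1 : ℕ) : ℝ) * ((x 0)^(m 0 - 1 - 1) * (x 1)^(m 1))
        + (m 1 : ℝ) * ((m 1 - 1 : ℕ) : ℝ) * ((x 0)^(m 0) * (x 1)^(m 1 - 1 - 1))) := by
    rw [hU, laplacian_msum]
  -- the integral side
  have hintg : ∀ m : Fin 2 →₀ ℕ, IntegrableOn
      (fun y : Fin 2 → ℝ => MvPolynomial.coeff m p *
        ((x 0)^(m 0) * (x 1)^(m 1) - (y 0)^(m 0) * (y 1)^(m 1)))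
      {y : Fin 2 → ℝ | dist y x ≤ δ} := by
    intro m
    refine ContinuousOn.integrableOn_compact hcmp (Continuous.continuousOn ?_)
    fun_prop
  have hfun : ∀ y : Fin 2 → ℝ, u x - u y = ∑ m ∈ p.support, MvPolynomial.coeff m p *
      ((x 0)^(m 0) * (x 1)^(m 1) - (y 0)^(m 0) * (y 1)^(m 1)) := by
    intro y
    rw [hu' x, hu' y, ← Finset.sum_sub_distrib]
    exact Finset.sum_congr rfl fun m _ => by ring
  have hmono : ∀ a b : ℕ, ∫ y in {y : Fin 2 → ℝ | dist y x ≤ δ}, (y 0)^a * (y 1)^b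
      = (((x 0)+δ)^(a+1) - ((x 0)-δ)^(a+1))/(a+1)
        * ((((x 1)+δ)^(b+1) - ((x 1)-δ)^(b+1))/(b+1)) := by
    intro a b
    rw [hS]
    have := integral_box (fun i => Set.Icc (x i - δ) (x i + δ))
      (fun i => measurableSet_Icc) ![fun t => t^a, fun t => t^b]
    simp only [Matrix.cons_val_zero, Matrix.cons_val_one, Matrix.head_cons] at this
    rw [this, int_pow_Icc _ _ (by linarith) a, int_pow_Icc _ _ (by linarith) b]
  have hconst : ∀ k : ℝ, ∫ y in {y : Fin 2 → ℝ | dist y x ≤ δ}, (fun _ => k) y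
      = k * ((2*δ) * (2*δ)) := by
    intro k
    rw [setIntegral_const, hS, measureReal_def, MeasureTheory.volume_pi_pi, Fin.prod_univ_two,
      Real.volume_Icc, Real.volume_Icc,
      show x 0 + δ - (x 0 - δ) = 2*δ by ring, show x 1 + δ - (x 1 - δ) = 2*δ by ring,
      ← ENNReal.ofReal_mul (by linarith)]
    rw [ENNReal.toReal_ofReal (by nlinarith), smul_eq_mul]
    ring
  have hsplit : ∫ y in {y : Fin 2 → ℝ | dist y x ≤ δ}, (u x - u y)
      = ∑ m ∈ p.support, MvPolynomial.coeff m p *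
        (((x 0)^(m 0) * (x 1)^(m 1)) * ((2*δ) * (2*δ))
          - (((x 0)+δ)^(m 0+1) - ((x 0)-δ)^(m 0+1))/(m 0+1)
            * ((((x 1)+δ)^(m 1+1) - ((x 1)-δ)^(m 1+1))/(m 1+1))) := by
    simp only [hfun]
    rw [MeasureTheory.integral_finset_sum _ (fun m _ => hintg m)]
    refine Finset.sum_congr rfl fun m _ => ?_
    rw [MeasureTheory.integral_const_mul]
    congr 1
    have h1 : IntegrableOn (fun _ : Fin 2 → ℝ => (x 0)^(m 0) * (x 1)^(m 1))
        {y : Fin 2 → ℝ | dist y x ≤ δ} := by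
      refine ContinuousOn.integrableOn_compact hcmp (Continuous.continuousOn ?_)
      fun_prop
    have h2 : IntegrableOn (fun y : Fin 2 → ℝ => (y 0)^(m 0) * (y 1)^(m 1))
        {y : Fin 2 → ℝ | dist y x ≤ δ} := by
      refine ContinuousOn.integrableOn_compact hcmp (Continuous.continuousOn ?_)
      fun_prop
    rw [MeasureTheory.integral_sub h1 h2, hmono, hconst]
  rw [hsplit, hlap, Finset.mul_sum, ← Finset.sum_neg_distrib]
  refine Finset.sum_congr rfl fun m hm => ?_
  have hdeg : m 0 + m 1 ≤ 3 := by
    have h1 : (m.sum fun _ e => e) ≤ 3 := le_trans (MvPolynomial.le_totalDegree hm) hp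
    rwa [Finsupp.sum_fintype _ _ (fun i => rfl), Fin.sum_univ_two] at h1
  have hk := key_identity δ hδ (m 0) (m 1) hdeg (x 0) (x 1)
  rw [hc]
  linear_combination (MvPolynomial.coeff m p) * hk
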